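/- Let p : [0,1] → ℝ be continuous and strictly positive, let λ, ν ∈ ℝ, let α, β ∈ ℝ, and let u, v : [0,1] → ℝ be twice continuously differentiable, strictly positive on (0,1), both satisfying BC(α,β), with −u''(x) = λ·p(x)·u(x) and −v''(x) = ν·v(x) for all x ∈ [0,1]. Then there exists x₀ ∈ [0,1] such that λ·p(x₀) = ν. -/

import Mathlib

open Real

/-- Separated boundary conditions BC(α,β) on [0,1]. -/
def BC (α β : ℝ) (w : ℝ → ℝ) : Prop :=
  w 0 * Real.cos α + deriv w 0 * Real.sin α = 0 ∧
  w 1 * Real.cos β + deriv w 1 * Real.sin β = 0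

/-- Mean-value form underlying Theorem 3.2: there is x₀ ∈ [0,1] with λ p(x₀) = ν. -/
theorem stmt_8 (p : ℝ → ℝ) (hp : Continuous p)
    (hppos : ∀ x ∈ Set.Icc (0:ℝ) 1, 0 < p x)
    (l ν α β : ℝ) (u v : ℝ → ℝ)
    (hu : ContDiff ℝ 2 u) (hv : ContDiff ℝ 2 v)
    (hupos : ∀ x ∈ Set.Ioo (0:ℝ) 1, 0 < u x)
    (hvpos : ∀ x ∈ Set.Ioo (0:ℝ) 1, 0 < v x)
    (hubc : BC α β u) (hvbc : BC α β v)
    (huode : ∀ x ∈ Set.Icc (0:ℝ) 1, -(deriv (deriv u) x) = l * p x * u x)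
    (hvode : ∀ x ∈ Set.Icc (0:ℝ) 1, -(deriv (deriv v) x) = ν * v x) :
    ∃ x₀ ∈ Set.Icc (0:ℝ) 1, l * p x₀ = ν := by
  -- decompose smoothness
  have hu2 : Differentiable ℝ u ∧ ContDiff ℝ 1 (deriv u) := by
    have := contDiff_succ_iff_deriv.mp (show ContDiff ℝ (1+1) u by exact_mod_cast hu)
    exact ⟨this.1, this.2.2⟩
  have hv2 : Differentiable ℝ v ∧ ContDiff ℝ 1 (deriv v) := by
    have := contDiff_succ_iff_deriv.mp (show ContDiff ℝ (1+1) v by exact_mod_cast hv)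
    exact ⟨this.1, this.2.2⟩
  have hdu : Differentiable ℝ (deriv u) := hu2.2.differentiable one_ne_zero
  have hdv : Differentiable ℝ (deriv v) := hv2.2.differentiable one_ne_zero
  -- Wronskian
  set W : ℝ → ℝ := fun x => u x * deriv v x - deriv u x * v x with hW
  have hWderiv : ∀ x : ℝ, HasDerivAt W
      (u x * deriv (deriv v) x - deriv (deriv u) x * v x) x := by
    intro x
    have h1 : HasDerivAt (fun y => u y * deriv v y)
        (deriv u x * deriv v x + u x * deriv (deriv v) x) x :=
      ((hu2.1 x).hasDerivAt).mul ((hdv x).hasDerivAt)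
    have h2 : HasDerivAt (fun y => deriv u y * v y)
        (deriv (deriv u) x * v x + deriv u x * deriv v x) x :=
      ((hdu x).hasDerivAt).mul ((hv2.1 x).hasDerivAt)
    have := h1.sub h2
    exact this.congr_deriv (by ring)
  have hWdiff : Differentiable ℝ W := fun x => (hWderiv x).differentiableAt
  -- boundary values of W vanish
  have bdry : ∀ (γ a b c d : ℝ), a * Real.cos γ + b * Real.sin γ = 0 →
      c * Real.cos γ + d * Real.sin γ = 0 → a * d - b * c = 0 := by
    intro γ a b c d h1 h2
    have hs := Real.sin_sq_add_cos_sq γ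
    have e1 : (a * d - b * c) * Real.cos γ = d * (a * Real.cos γ + b * Real.sin γ)
        - b * (c * Real.cos γ + d * Real.sin γ) := by ring
    have e2 : (a * d - b * c) * Real.sin γ = -c * (a * Real.cos γ + b * Real.sin γ)
        + a * (c * Real.cos γ + d * Real.sin γ) := by ring
    rw [h1, h2] at e1 e2
    simp only [mul_zero, sub_zero, neg_zero, zero_add, add_zero] at e1 e2
    linear_combination Real.sin γ * e2 + Real.cos γ * e1 - (a * d - b * c) * hs
  have hW0 : W 0 = 0 := by
    have := bdry α (u 0) (deriv u 0) (v 0) (deriv v 0) hubc.1 hvbc.1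
    simpa [hW] using this
  have hW1 : W 1 = 0 := by
    have := bdry β (u 1) (deriv u 1) (v 1) (deriv v 1) hubc.2 hvbc.2
    simpa [hW] using this
  -- Rolle
  obtain ⟨c, hc, hc0⟩ := exists_deriv_eq_zero (f := W) (by norm_num : (0:ℝ) < 1)
    (hWdiff.continuous.continuousOn) (hW0.trans hW1.symm)
  have hcI : c ∈ Set.Icc (0:ℝ) 1 := Set.Ioo_subset_Icc_self hc
  have hdW : deriv W c = u c * deriv (deriv v) c - deriv (deriv u) c * v c :=
    (hWderiv c).deriv
  rw [hdW] at hc0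
  have hue := huode c hcI
  have hve := hvode c hcI
  have hucpos := hupos c hc
  have hvcpos := hvpos c hc
  refine ⟨c, hcI, ?_⟩
  have key : (l * p c - ν) * (u c * v c) = 0 := by
    have : deriv (deriv v) c = -(ν * v c) := by linarith
    have h2 : deriv (deriv u) c = -(l * p c * u c) := by linarith
    rw [this, h2] at hc0
    nlinarith [hc0]
  have hpos : 0 < u c * v c := mul_pos hucpos hvcpos
  have := mul_eq_zero.mp key
  rcases this with h | h
  · linarith
  · exact absurd h (ne_of_gt hpos)
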